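/- Let A be a commutative ring of characteristic p and 𝔞 ⊆ A a nilpotent ideal with Ā = A/𝔞. Let b, b′ ∈ GL_r(A((z))) be such that there exist N ∈ ℕ, integers m, m′ and units u, u′ ∈ A⟦z⟧ˣ with z^N·b, z^N·b⁻¹, z^N·b′, z^N·(b′)⁻¹ ∈ M_r(A⟦z⟧), det b = z^m·u and det b′ = z^{m′}·u′ (i.e. both local shtukas are bounded). Let f ∈ GL_r(A((z))) satisfy f·b = b′·σ(f), and suppose the reduction f̄ ∈ GL_r(Ā((z))) satisfies det f̄ = z^{l}·w̄ for some l ∈ ℤ and some unit w̄ ∈ (Ā⟦z⟧)ˣ. Then det f = z^{l}·w for some unit w ∈ A⟦z⟧ˣ, and there is M ∈ ℕ with z^M·f ∈ M_r(A⟦z⟧); that is, a quasi-isogeny between bounded local shtukas whose reduction modulo 𝔞 is bounded by (μ, z) for some μ is itself bounded by (μ̃, z) for some μ̃. -/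

import Mathlib

noncomputable section

open scoped Classical

namespace HVpaper

variable {A : Type*} [CommRing A]

/-- Coefficientwise `q`-th power map on formal Laurent series (the map `σ` for `q ≠ 0`;
junk value `0` for `q = 0`). -/
def laurentFrob (q : ℕ) (x : LaurentSeries A) : LaurentSeries A :=
  if hq : q = 0 then 0 else x.map (ZeroHom.mk (fun a : A => a ^ q) (zero_pow hq))

/-- Entrywise `σ` on matrices of Laurent series. -/
def matFrob (q : ℕ) {n : Type*} (M : Matrix n n (LaurentSeries A)) :
    Matrix n n (LaurentSeries A) :=
  M.map (laurentFrob q)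

/-- `x` lies in `z^n · A⟦z⟧`, i.e. all coefficients below `n` vanish. -/
def InZPow (n : ℤ) (x : LaurentSeries A) : Prop :=
  ∀ m : ℤ, m < n → x.coeff m = 0

/-- `x` lies in the subring `A⟦z⟧` of `A((z))`. -/
def InPS (x : LaurentSeries A) : Prop :=
  ∀ m : ℤ, m < 0 → x.coeff m = 0

/-- `u` is a unit of the subring `A⟦z⟧` of `A((z))`. -/
def IsPSUnit (u : LaurentSeries A) : Prop :=
  InPS u ∧ ∃ v : LaurentSeries A, InPS v ∧ u * v = 1

/-- The element `z^n` of `A((z))`. -/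
def zPow (n : ℤ) : LaurentSeries A :=
  HahnSeries.single n 1

/-- The coefficientwise map on Laurent series induced by a ring homomorphism. -/
def lmap {B : Type*} [CommRing B] (f : A →+* B) (x : LaurentSeries A) : LaurentSeries B :=
  x.map f

variable {k : Type*} [Field k]

/-- Membership in the subgroup `I_n` of `GL_r(k⟦z⟧)`:  `g` and its inverse have entries in
`k⟦z⟧`, `g ≡ 1 mod z^n` on the diagonal, the entries above the diagonal lie in `z^n k⟦z⟧` and
those below the diagonal lie in `z^(n+1) k⟦z⟧`.  For `n = 0` this is the standard Iwahori
subgroup. -/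
def InIwahori {r : ℕ} (n : ℕ) (g : Matrix (Fin r) (Fin r) (LaurentSeries k)) : Prop :=
  (∀ i j, InPS (g i j)) ∧ IsUnit g ∧ (∀ i j, InPS (g⁻¹ i j)) ∧
  (∀ i : Fin r, InZPow (n : ℤ) (g i i - 1)) ∧
  (∀ i j : Fin r, i < j → InZPow (n : ℤ) (g i j)) ∧
  (∀ i j : Fin r, j < i → InZPow ((n : ℤ) + 1) (g i j))

/-- The sum of the `i` smallest (i.e. last `i`) entries of the nonincreasing tuple `μ`. -/
def lowSum {r : ℕ} (μ : Fin r → ℤ) (i : ℕ) : ℤ :=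
  ∑ j : Fin r, if r ≤ (j : ℕ) + i then μ j else 0

/-- The matrix `M` over `A((z))` is bounded by the dominant cocharacter
`μ = (μ 0 ≥ … ≥ μ (r-1))` of `GL_r`: for each `1 ≤ i ≤ r` every `i×i` minor of `M` lies in
`z^(μ_{r-i+1}+⋯+μ_r)·A⟦z⟧` and `det M = z^(μ_1+⋯+μ_r)` times a unit of `A⟦z⟧`. -/
def BoundedBy {r : ℕ} (μ : Fin r → ℤ) (M : Matrix (Fin r) (Fin r) (LaurentSeries A)) : Prop :=
  (∀ i : Fin r, ∀ ri ci : Fin ((i : ℕ) + 1) → Fin r,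
    InZPow (lowSum μ ((i : ℕ) + 1)) ((M.submatrix ri ci).det)) ∧
  (∃ u : LaurentSeries A, IsPSUnit u ∧ M.det = zPow (∑ j, μ j) * u)


section Aux

variable {A₀ : Type*} [CommRing A₀]

lemma zPow_mul (a b : ℤ) : (zPow a : LaurentSeries A₀) * zPow b = zPow (a + b) := by
  simp [zPow, HahnSeries.single_mul_single]

lemma zPow_zero' : (zPow 0 : LaurentSeries A₀) = 1 := HahnSeries.single_zero_one

lemma zPow_mul_coeff {n : ℤ} {x : LaurentSeries A₀} {m : ℤ} :
    (zPow n * x).coeff m = x.coeff (m - n) := by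
  have h := HahnSeries.coeff_single_mul_add (r := (1 : A₀)) (x := x) (a := m - n) (b := n)
  rw [sub_add_cancel] at h
  simpa [zPow] using h

lemma InPS_one : InPS (1 : LaurentSeries A₀) := by
  intro m hm
  rw [HahnSeries.coeff_one, if_neg hm.ne]

lemma InPS_zero : InPS (0 : LaurentSeries A₀) := fun m _ => rfl

lemma InPS.nonneg_of_mem_support {x : LaurentSeries A₀} (hx : InPS x) {a : ℤ}
    (ha : a ∈ x.support) : 0 ≤ a :=
  le_of_not_gt fun h => ((HahnSeries.mem_support x a).mp ha) (hx a h)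

lemma InPS.mul {x y : LaurentSeries A₀} (hx : InPS x) (hy : InPS y) : InPS (x * y) := by
  intro m hm
  rw [HahnSeries.coeff_mul]
  refine Finset.sum_eq_zero fun ij hij => ?_
  rw [Finset.mem_addAntidiagonal] at hij
  obtain ⟨h1, h2, h3⟩ := hij
  have p1 : 0 ≤ ij.1 := hx.nonneg_of_mem_support h1
  have p2 : 0 ≤ ij.2 := hy.nonneg_of_mem_support h2
  omega

lemma InPS.add {x y : LaurentSeries A₀} (hx : InPS x) (hy : InPS y) : InPS (x + y) := by
  intro m hm
  rw [HahnSeries.coeff_add, hx m hm, hy m hm, add_zero]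

lemma coeff_zero_mul_of_inPS {x y : LaurentSeries A₀} (hx : InPS x) (hy : InPS y) :
    (x * y).coeff 0 = x.coeff 0 * y.coeff 0 := by
  rw [HahnSeries.coeff_mul]
  have hsub : Finset.antidiagonal x.isPWO_support y.isPWO_support 0 ⊆
      {((0 : ℤ), (0 : ℤ))} := by
    intro ij hij
    rw [Finset.mem_addAntidiagonal] at hij
    obtain ⟨h1, h2, h3⟩ := hij
    have p1 : 0 ≤ ij.1 := hx.nonneg_of_mem_support h1
    have p2 : 0 ≤ ij.2 := hy.nonneg_of_mem_support h2
    have e1 : ij.1 = 0 := by omega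
    have e2 : ij.2 = 0 := by omega
    simp [Finset.mem_singleton, Prod.ext_iff, e1, e2]
  rw [Finset.sum_subset hsub (fun ij hij hns => ?_), Finset.sum_singleton]
  rw [Finset.mem_singleton] at hij
  subst hij
  rw [Finset.mem_addAntidiagonal] at hns
  push_neg at hns
  by_cases h0 : (0 : ℤ) ∈ x.support
  · by_cases h0' : (0 : ℤ) ∈ y.support
    · exact absurd (add_zero (0 : ℤ)) (hns h0 h0')
    · have : y.coeff 0 = 0 := by
        by_contra hc
        exact h0' ((HahnSeries.mem_support y 0).mpr hc)
      rw [this, mul_zero]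
  · have : x.coeff 0 = 0 := by
      by_contra hc
      exact h0 ((HahnSeries.mem_support x 0).mpr hc)
    rw [this, zero_mul]

/-- The ring homomorphism on Laurent series induced by a coefficient ring homomorphism. -/
def lRingHom {B : Type*} [CommRing B] (g : A₀ →+* B) :
    LaurentSeries A₀ →+* LaurentSeries B where
  toFun := lmap g
  map_one' := by
    ext a
    simp [lmap, HahnSeries.coeff_one, apply_ite g]
  map_mul' x y := by
    have h := HahnSeries.map_mul (Γ := ℤ) (g.toNonUnitalRingHom) (x := x) (y := y)
    have e : ∀ z : LaurentSeries A₀, z.map g.toNonUnitalRingHom = lmap g z := fun z => rfl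
    rw [e, e, e] at h
    exact h
  map_zero' := by ext a; simp [lmap]
  map_add' x y := by ext a; simp [lmap]

@[simp] lemma lRingHom_coeff {B : Type*} [CommRing B] (g : A₀ →+* B)
    (x : LaurentSeries A₀) (a : ℤ) : (lRingHom g x).coeff a = g (x.coeff a) := rfl

lemma lRingHom_zPow {B : Type*} [CommRing B] (g : A₀ →+* B) (n : ℤ) :
    lRingHom g (zPow n) = zPow n := by
  ext a
  simp [zPow, HahnSeries.coeff_single, apply_ite g]

lemma InPS.lmap {B : Type*} [CommRing B] (g : A₀ →+* B) {x : LaurentSeries A₀}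
    (hx : InPS x) : InPS (lRingHom g x) := by
  intro m hm
  rw [lRingHom_coeff, hx m hm, map_zero]

lemma IsPSUnit.lmap {B : Type*} [CommRing B] (g : A₀ →+* B) {x : LaurentSeries A₀}
    (hx : IsPSUnit x) : IsPSUnit (lRingHom g x) := by
  obtain ⟨h1, v, h2, h3⟩ := hx
  exact ⟨h1.lmap g, lRingHom g v, h2.lmap g, by rw [← map_mul, h3, map_one]⟩

end Aux

/-- **Second part of Proposition 2.11** for `G = GL_r`:  a quasi-isogeny `f` between bounded
local shtukas over a ring `A` of characteristic `p` with nilpotent ideal `𝔞` whose reduction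
modulo `𝔞` is bounded by `(μ, z)` for some `μ` is itself bounded by `(μ̃, z)` for some `μ̃`;
concretely, if `det f̄ = z^l·w̄` for a unit `w̄` of `Ā⟦z⟧`, then `det f = z^l·w` for a unit `w`
of `A⟦z⟧` and all entries of `z^M·f` lie in `A⟦z⟧` for some `M ∈ ℕ`. -/
theorem quasi_isogeny_bounded
    {p : ℕ} (hp : p.Prime) {e : ℕ} (he : 1 ≤ e) {q : ℕ} (hq : q = p ^ e)
    {A : Type*} [CommRing A] [CharP A p]
    (𝔞 : Ideal A) (h𝔞 : IsNilpotent 𝔞)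
    {r : ℕ} (hr : 1 ≤ r)
    (b b' f : Matrix (Fin r) (Fin r) (LaurentSeries A))
    (hb : IsUnit b) (hb' : IsUnit b')
    (hbd : ∃ N : ℕ, ∀ i j : Fin r,
      InZPow (-(N : ℤ)) (b i j) ∧ InZPow (-(N : ℤ)) (b⁻¹ i j) ∧
      InZPow (-(N : ℤ)) (b' i j) ∧ InZPow (-(N : ℤ)) (b'⁻¹ i j))
    (hdetb : ∃ (m : ℤ) (u : LaurentSeries A), IsPSUnit u ∧ b.det = zPow m * u)
    (hdetb' : ∃ (m' : ℤ) (u' : LaurentSeries A), IsPSUnit u' ∧ b'.det = zPow m' * u')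
    (hf : IsUnit f) (hqi : f * b = b' * matFrob q f)
    (l : ℤ) (w' : LaurentSeries (A ⧸ 𝔞)) (hw' : IsPSUnit w')
    (hdetfbar : (f.map (lmap (Ideal.Quotient.mk 𝔞))).det = zPow l * w') :
    (∃ w : LaurentSeries A, IsPSUnit w ∧ f.det = zPow l * w) ∧
    ∃ M : ℕ, ∀ i j : Fin r, InZPow (-(M : ℤ)) (f i j) := by
  haveI := Fact.mk hp
  -- Part 2: entries of `f` are Laurent series, hence uniformly bounded below.
  have part2 : ∃ M : ℕ, ∀ i j : Fin r, InZPow (-(M : ℤ)) (f i j) := by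
    haveI : NeZero r := ⟨by omega⟩
    have hne : (Finset.univ : Finset (Fin r × Fin r)).Nonempty := Finset.univ_nonempty
    set o := Finset.univ.inf' hne (fun ij : Fin r × Fin r => (f ij.1 ij.2).order) with ho
    refine ⟨(-o).toNat, fun i j m hm => ?_⟩
    have h1 : o ≤ (f i j).order :=
      Finset.inf'_le (fun ij : Fin r × Fin r => (f ij.1 ij.2).order) (Finset.mem_univ (i, j))
    have h2 : -o ≤ ((-o).toNat : ℤ) := Int.self_le_toNat _
    exact HahnSeries.coeff_eq_zero_of_lt_order (by omega)
  refine ⟨?_, part2⟩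
  rcases subsingleton_or_nontrivial A with hA | hA
  · -- trivial ring: everything is equal
    have hall : ∀ x y : LaurentSeries A, x = y := fun x y => by
      ext g; exact Subsingleton.elim _ _
    exact ⟨1, ⟨fun m _ => Subsingleton.elim _ _,
      1, fun m _ => Subsingleton.elim _ _, hall _ _⟩, hall _ _⟩
  -- nontrivial case
  obtain ⟨n, hn⟩ := h𝔞
  have hn0 : n ≠ 0 := by
    rintro rfl
    rw [pow_zero, Ideal.one_eq_top] at hn
    have h1 : (1 : A) ∈ (⊤ : Ideal A) := trivial
    rw [hn] at h1
    exact one_ne_zero ((Ideal.mem_bot).mp h1)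
  have h𝔞top : 𝔞 ≠ ⊤ := by
    rintro rfl
    rw [Ideal.top_pow] at hn
    have h1 : (1 : A) ∈ (⊤ : Ideal A) := trivial
    rw [hn] at h1
    exact one_ne_zero ((Ideal.mem_bot).mp h1)
  haveI : Nontrivial (A ⧸ 𝔞) := Ideal.Quotient.nontrivial_iff.mpr h𝔞top
  haveI : CharP (A ⧸ 𝔞) p := by
    refine CharP.quotient' p 𝔞 fun x hx => ?_
    have hxn : ((x : A)) ^ n ∈ 𝔞 ^ n := Ideal.pow_mem_pow hx n
    rw [hn] at hxn
    have hxn0 : ((x ^ n : ℕ) : A) = 0 := by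
      rw [Nat.cast_pow]; exact (Ideal.mem_bot).mp hxn
    have hdvd : p ∣ x ^ n := (CharP.cast_eq_zero_iff A p (x ^ n)).mp hxn0
    have : p ∣ x := hp.dvd_of_dvd_pow hdvd
    exact (CharP.cast_eq_zero_iff A p x).mpr this
  have hq2 : 2 ≤ q := by
    rw [hq]
    exact Nat.one_lt_pow (by omega) hp.one_lt
  have hqne : q ≠ 0 := by omega
  set Q : LaurentSeries A →+* LaurentSeries (A ⧸ 𝔞) := lRingHom (Ideal.Quotient.mk 𝔞) with hQdef
  set FH : LaurentSeries A →+* LaurentSeries A := lRingHom (iterateFrobenius A p e) with hFHdef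
  set FH' : LaurentSeries (A ⧸ 𝔞) →+* LaurentSeries (A ⧸ 𝔞) :=
    lRingHom (iterateFrobenius (A ⧸ 𝔞) p e) with hFH'def
  have hQF : ∀ x : LaurentSeries A, Q (FH x) = FH' (Q x) := by
    intro x
    ext g
    simp [hQdef, hFHdef, hFH'def, iterateFrobenius_def, map_pow]
  have hFHcoeff : ∀ (x : LaurentSeries A) (g : ℤ), (FH x).coeff g = (x.coeff g) ^ q := by
    intro x g
    rw [hFHdef, lRingHom_coeff, iterateFrobenius_def, hq]
  have hmat : matFrob q f = f.map FH := by
    apply Matrix.ext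
    intro i j
    show laurentFrob q (f i j) = FH (f i j)
    rw [laurentFrob, dif_neg hqne]
    ext g
    simp [hFHdef, iterateFrobenius_def, hq]
  obtain ⟨m, u, ⟨huPS, v, hvPS, huv⟩, hbu⟩ := hdetb
  obtain ⟨m', u', ⟨hu'PS, v', hv'PS, hu'v'⟩, hb'u'⟩ := hdetb'
  obtain ⟨hw'PS, w'', hw''PS, hww''⟩ := hw'
  set d := f.det with hd
  have hQz : ∀ nn : ℤ, Q (zPow nn) = zPow nn := fun nn => lRingHom_zPow _ nn
  have hFH'z : ∀ nn : ℤ, FH' (zPow nn) = zPow nn := fun nn => lRingHom_zPow _ nn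
  have hdm : (f.map ⇑FH).det = FH d := by
    rw [← RingHom.mapMatrix_apply]
    exact (RingHom.map_det FH f).symm
  have hdet : d * (zPow m * u) = (zPow m' * u') * FH d := by
    have h0 := congrArg Matrix.det hqi
    rw [Matrix.det_mul, Matrix.det_mul, hbu, hb'u', hmat, hdm] at h0
    exact h0
  set δ := m' - m with hδdef
  set V := u' * v with hVdef
  have hVinv : V * (v' * u) = 1 := by
    have h1 : V * (v' * u) = (u' * v') * (u * v) := by rw [hVdef]; ring
    rw [h1, hu'v', huv, one_mul]
  have hVPS : InPS V := hu'PS.mul hvPS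
  have hz : (zPow m' : LaurentSeries A) = zPow δ * zPow m := by
    rw [zPow_mul]; congr 1; omega
  have hz2 : (zPow m : LaurentSeries A) * zPow (-m) = 1 := by
    rw [zPow_mul, add_neg_cancel, zPow_zero']
  have key : d = zPow δ * V * FH d := by
    rw [hVdef]
    linear_combination (zPow (-m) * v) * hdet - (d * zPow m * zPow (-m)) * huv +
      (zPow (-m) * v * u' * FH d) * hz + (zPow δ * u' * v * FH d - d) * hz2
  have hQd : Q d = zPow l * w' := by
    rw [hd, RingHom.map_det, RingHom.mapMatrix_apply]
    exact hdetfbar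
  have keyQ : Q d = zPow δ * Q V * FH' (Q d) := by
    have h1 := congrArg Q key
    rw [map_mul, map_mul, hQF, hQz] at h1
    exact h1
  have hδ0 : δ = 0 := by
    set c := Q V * FH' w' with hcdef
    have hQVPS : InPS (Q V) := hVPS.lmap _
    have hFw'PS : InPS (FH' w') := hw'PS.lmap _
    have hcPS : InPS c := hQVPS.mul hFw'PS
    have hceq : zPow l * w' = zPow (δ + l) * c := by
      calc zPow l * w' = Q d := hQd.symm
        _ = zPow δ * Q V * FH' (Q d) := keyQ
        _ = zPow δ * Q V * (zPow l * FH' w') := by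
              rw [hQd, show FH' (zPow l * w') = FH' (zPow l) * FH' w' from map_mul _ _ _,
                hFH'z]
        _ = (zPow δ * zPow l) * (Q V * FH' w') := by ring
        _ = zPow (δ + l) * c := by rw [zPow_mul, hcdef]
    set X := Q (v' * u) * FH' w'' with hXdef
    have hXPS : InPS X := (((hv'PS.mul huPS)).lmap _).mul (hw''PS.lmap _)
    have hinv : c * X = 1 := by
      have h1 : c * X = (Q V * Q (v' * u)) * (FH' w' * FH' w'') := by
        rw [hcdef, hXdef]; ring
      rw [h1, ← map_mul, ← map_mul, hVinv, hww'', map_one, map_one, one_mul]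
    have hc0 : c.coeff 0 * X.coeff 0 = 1 := by
      have h1 := coeff_zero_mul_of_inPS hcPS hXPS
      rw [hinv] at h1
      rw [← h1, HahnSeries.coeff_one, if_pos rfl]
    have hw'0 : w'.coeff 0 * w''.coeff 0 = 1 := by
      have h1 := coeff_zero_mul_of_inPS hw'PS hw''PS
      rw [hww''] at h1
      rw [← h1, HahnSeries.coeff_one, if_pos rfl]
    rcases lt_trichotomy δ 0 with h | h | h
    · exfalso
      have h2 := congrArg (fun x => HahnSeries.coeff x (l + δ)) hceq
      rw [zPow_mul_coeff, zPow_mul_coeff] at h2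
      have e1 : l + δ - l = δ := by omega
      have e2 : l + δ - (δ + l) = 0 := by omega
      rw [e1, e2, hw'PS δ h] at h2
      rw [← h2, zero_mul] at hc0
      exact zero_ne_one hc0
    · exact h
    · exfalso
      have h2 := congrArg (fun x => HahnSeries.coeff x l) hceq
      rw [zPow_mul_coeff, zPow_mul_coeff] at h2
      have e1 : l - l = (0 : ℤ) := by omega
      rw [e1, hcPS (l - (δ + l)) (by omega)] at h2
      rw [h2, zero_mul] at hw'0
      exact zero_ne_one hw'0
  have key0 : d = V * FH d := by
    rw [hδ0, zPow_zero', one_mul] at key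
    exact key
  -- coefficients of `d` below `l` vanish
  have hcoe : ∀ t : ℕ, ∀ m₀ : ℤ, m₀ < l → d.coeff m₀ ∈ 𝔞 ^ (t + 1) := by
    intro t
    induction t with
    | zero =>
      intro m₀ hm₀
      rw [pow_one, ← Ideal.Quotient.eq_zero_iff_mem]
      have h1 : (Q d).coeff m₀ = 0 := by
        rw [hQd, zPow_mul_coeff]
        exact hw'PS _ (by omega)
      exact h1
    | succ t ih =>
      intro m₀ hm₀
      have hcalc : d.coeff m₀ = (V * FH d).coeff m₀ := by rw [← key0]
      rw [hcalc, HahnSeries.coeff_mul]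
      refine Ideal.sum_mem _ fun ij hij => ?_
      rw [Finset.mem_addAntidiagonal] at hij
      obtain ⟨h1, h2, h3⟩ := hij
      have p1 : 0 ≤ ij.1 := hVPS.nonneg_of_mem_support h1
      have p2 : ij.2 < l := by omega
      refine Ideal.mul_mem_left _ _ ?_
      rw [hFHcoeff]
      have h4 : (d.coeff ij.2) ^ q ∈ (𝔞 ^ (t + 1)) ^ q := Ideal.pow_mem_pow (ih _ p2) q
      have h5 : (𝔞 ^ (t + 1)) ^ q ≤ 𝔞 ^ (t + 1 + 1) := by
        rw [← pow_mul]
        exact Ideal.pow_le_pow_right (by nlinarith)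
      exact h5 h4
  have hvanish : ∀ m₀ : ℤ, m₀ < l → d.coeff m₀ = 0 := by
    intro m₀ hm₀
    have h1 := hcoe n m₀ hm₀
    have h2 : 𝔞 ^ (n + 1) ≤ ⊥ := by
      calc 𝔞 ^ (n + 1) ≤ 𝔞 ^ n := Ideal.pow_le_pow_right (Nat.le_succ n)
        _ = ⊥ := by rw [hn]; rfl
    exact (Ideal.mem_bot).mp (h2 h1)
  set w := zPow (-l) * d with hwdef
  have hwPS : InPS w := by
    intro m₀ hm₀
    rw [hwdef, zPow_mul_coeff]
    exact hvanish _ (by omega)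
  have hdw : d = zPow l * w := by
    rw [hwdef, ← mul_assoc, zPow_mul, add_neg_cancel, zPow_zero', one_mul]
  have hQw : Q w = w' := by
    rw [hwdef, map_mul, hQz, hQd, ← mul_assoc, zPow_mul, neg_add_cancel,
      zPow_zero', one_mul]
  -- lift the inverse of `w'`
  have hsurj : Function.Surjective (Ideal.Quotient.mk 𝔞) := Ideal.Quotient.mk_surjective
  classical
  let s : ZeroHom (A ⧸ 𝔞) A :=
    ⟨fun x => if x = 0 then 0 else (hsurj x).choose, by simp⟩
  have hs : ∀ x, Ideal.Quotient.mk 𝔞 (s x) = x := by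
    intro x
    by_cases h : x = 0
    · simp [s, h]
    · simp only [s, ZeroHom.coe_mk, if_neg h]
      exact (hsurj x).choose_spec
  set v₀ : LaurentSeries A := w''.map s with hv₀def
  have hv₀PS : InPS v₀ := by
    intro m₀ hm₀
    show s (w''.coeff m₀) = 0
    rw [hw''PS m₀ hm₀, map_zero]
  have hQv₀ : Q v₀ = w'' := by
    ext g
    show Ideal.Quotient.mk 𝔞 (s (w''.coeff g)) = w''.coeff g
    exact hs _
  set ε := w * v₀ - 1 with hεdef
  have hεPS : InPS ε := by
    intro m₀ hm₀
    rw [hεdef, HahnSeries.coeff_sub, (hwPS.mul hv₀PS) m₀ hm₀, InPS_one m₀ hm₀, sub_zero]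
  have hεmem : ∀ g : ℤ, ε.coeff g ∈ 𝔞 := by
    intro g
    rw [← Ideal.Quotient.eq_zero_iff_mem]
    have hQε : Q ε = 0 := by
      rw [hεdef, map_sub, map_mul, map_one, hQw, hQv₀, hww'', sub_self]
    have h1 := congrArg (fun x => HahnSeries.coeff x g) hQε
    exact h1
  have hεpow : ∀ t : ℕ, ∀ g : ℤ, (ε ^ (t + 1)).coeff g ∈ 𝔞 ^ (t + 1) := by
    intro t
    induction t with
    | zero => simpa using hεmem
    | succ t ih =>
      intro g
      rw [show ε ^ (t + 1 + 1) = ε ^ (t + 1) * ε from pow_succ ε (t + 1),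
        HahnSeries.coeff_mul]
      refine Ideal.sum_mem _ fun ij _ => ?_
      rw [show 𝔞 ^ (t + 1 + 1) = 𝔞 ^ (t + 1) * 𝔞 from pow_succ 𝔞 (t + 1)]
      exact Ideal.mul_mem_mul (ih ij.1) (hεmem ij.2)
  have hεnil : ε ^ (n + 1) = 0 := by
    ext g
    have h1 := hεpow n g
    have h2 : 𝔞 ^ (n + 1) ≤ ⊥ := by
      calc 𝔞 ^ (n + 1) ≤ 𝔞 ^ n := Ideal.pow_le_pow_right (Nat.le_succ n)
        _ = ⊥ := by rw [hn]; rfl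
    exact (Ideal.mem_bot).mp (h2 h1)
  set S := ∑ i ∈ Finset.range (n + 1), (-ε) ^ i with hSdef
  have hnegPS : InPS (-ε) := by
    intro m₀ hm₀
    rw [HahnSeries.coeff_neg, hεPS m₀ hm₀, neg_zero]
  have hpowPS : ∀ i : ℕ, InPS ((-ε) ^ i) := by
    intro i
    induction i with
    | zero => simpa using InPS_one
    | succ i ih => rw [pow_succ]; exact ih.mul hnegPS
  have hSPS : InPS S := by
    rw [hSdef]
    exact Finset.sum_induction _ InPS (fun a b ha hb => ha.add hb) InPS_zero
      (fun i _ => hpowPS i)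
  have hgeom : (1 + ε) * S = 1 := by
    have h := geom_sum_mul (-ε) (n + 1)
    have h2 : (-ε) ^ (n + 1) = 0 := by
      rw [show (-ε) = (-1) * ε from (neg_one_mul ε).symm, mul_pow, hεnil, mul_zero]
    rw [h2] at h
    linear_combination -h
  refine ⟨w, ⟨hwPS, v₀ * S, hv₀PS.mul hSPS, ?_⟩, hdw⟩
  have h1ε : 1 + ε = w * v₀ := by rw [hεdef]; ring
  calc w * (v₀ * S) = (w * v₀) * S := (mul_assoc w v₀ S).symm
    _ = (1 + ε) * S := by rw [h1ε]
    _ = 1 := hgeom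

end HVpaper
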